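/- Let (X, μ) be a finite measure space, r ∈ (1,2), R ∈ L^∞(X), c > 0, and for each α > 0 let u_α : X → (0,∞) be measurable with u_α, u_α^{-1} ∈ L^r. Define Ṽ_α = min{ c·R + α (‖u_α‖_{L^r} / u_α)^{2-r}, 1 }. Then μ({ x : Ṽ_α(x) < 1/2 }) ≤ (C/α)^{r/(2-r)} for a constant C depending only on ‖R‖_∞, c, r, μ(X); in particular μ({Ṽ_α < 1/2}) → 0 as α → ∞. -/

import Mathlib

open MeasureTheory Filter

/-- measure-smallness of the set where the truncated potential
`Ṽ_α = min{c·R + α(‖u_α‖_{L^r}/u_α)^{2-r}, 1}` is below `1/2`: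
`μ({Ṽ_α < 1/2}) ≤ (C/α)^{r/(2-r)}`, with `C` depending only on `‖R‖_∞, c, r, μ(X)`;
in particular this measure tends to `0` as `α → ∞`. -/
theorem truncated_potential_small_set {X : Type*} [MeasurableSpace X] (μ : Measure X)
    [IsFiniteMeasure μ] (r : ℝ) (hr1 : 1 < r) (hr2 : r < 2)
    (R : X → ℝ) (hRmeas : Measurable R) (Λ : ℝ) (hRbdd : ∀ x, |R x| ≤ Λ)
    (c : ℝ) (hc : 0 < c)
    (u : ℝ → X → ℝ) (humeas : ∀ α, Measurable (u α)) (hupos : ∀ α x, 0 < u α x)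
    (huLr : ∀ α, Integrable (fun x => u α x ^ r) μ)
    (huinvLr : ∀ α, Integrable (fun x => (u α x)⁻¹ ^ r) μ) :
    ∃ C : ℝ, 0 < C ∧
      (∀ α : ℝ, 0 < α →
        μ {x | min (c * R x +
              α * ((∫ y, u α y ^ r ∂μ) ^ (1 / r) / u α x) ^ (2 - r)) 1 < 1 / 2}
          ≤ ENNReal.ofReal ((C / α) ^ (r / (2 - r)))) ∧
      Tendsto (fun α : ℝ =>
          μ {x | min (c * R x +
              α * ((∫ y, u α y ^ r ∂μ) ^ (1 / r) / u α x) ^ (2 - r)) 1 < 1 / 2})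
        atTop (nhds 0) := by
  have h2r : (0:ℝ) < 2 - r := by linarith
  have hr0 : (0:ℝ) < r := by linarith
  set C : ℝ := 1/2 + c * max Λ 0 with hCdef
  have hC : 0 < C := by
    have := mul_nonneg hc.le (le_max_right Λ 0); rw [hCdef]; linarith
  have key : ∀ α : ℝ, 0 < α →
      μ {x | min (c * R x +
            α * ((∫ y, u α y ^ r ∂μ) ^ (1 / r) / u α x) ^ (2 - r)) 1 < 1 / 2}
        ≤ ENNReal.ofReal ((C / α) ^ (r / (2 - r))) := by
    intro α hα
    by_cases hμ : μ = 0
    · simp [hμ]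
    set I : ℝ := ∫ y, u α y ^ r ∂μ with hIdef
    set N : ℝ := I ^ (1 / r) with hNdef
    set E : Set X := {x | min (c * R x + α * (N / u α x) ^ (2 - r)) 1 < 1 / 2} with hEdef
    have hI : 0 < I := by
      rw [hIdef, integral_pos_iff_support_of_nonneg
        (fun y => Real.rpow_nonneg (hupos α y).le r) (huLr α)]
      have hs : Function.support (fun y => u α y ^ r) = Set.univ := by
        ext y; simp [Function.mem_support, (Real.rpow_pos_of_pos (hupos α y) r).ne']
      rw [hs]
      exact Measure.measure_univ_pos.mpr hμ
    have hNpos : 0 < N := Real.rpow_pos_of_pos hI _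
    have hCα : 0 < C / α := div_pos hC hα
    set B : ℝ := (C / α) ^ (r / (2 - r)) with hBdef
    set b : ℝ := (C / α) ^ (1 / (2 - r)) with hbdef
    have hB : 0 < B := Real.rpow_pos_of_pos hCα _
    have hb : 0 < b := Real.rpow_pos_of_pos hCα _
    have hbB : b ^ r = B := by
      rw [hbdef, hBdef, ← Real.rpow_mul hCα.le, one_div, inv_mul_eq_div]
    have hNr : N ^ r = I := by
      rw [hNdef, ← Real.rpow_mul hI.le, one_div, inv_mul_cancel₀ hr0.ne', Real.rpow_one]
    have hEmeas : MeasurableSet E := by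
      have hm : Measurable fun x => min (c * R x + α * (N / u α x) ^ (2 - r)) 1 := by
        fun_prop
      exact measurableSet_lt hm measurable_const
    have hpt : ∀ x ∈ E, I / B ≤ u α x ^ r := by
      intro x hx
      simp only [hEdef, Set.mem_setOf_eq] at hx
      have hx' : c * R x + α * (N / u α x) ^ (2 - r) < 1 / 2 := by
        rcases min_lt_iff.mp hx with h | h
        · exact h
        · norm_num at h
      have hRx : -(c * R x) ≤ c * max Λ 0 := by
        have h1 : -R x ≤ max Λ 0 := le_trans (neg_le_abs _) (le_trans (hRbdd x) (le_max_left _ _))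
        calc -(c * R x) = c * (-R x) := by ring
          _ ≤ c * max Λ 0 := mul_le_mul_of_nonneg_left h1 hc.le
      have h2 : α * (N / u α x) ^ (2 - r) < C := by rw [hCdef]; linarith
      have h3 : (N / u α x) ^ (2 - r) < C / α := (lt_div_iff₀' hα).mpr h2
      have hq : 0 ≤ N / u α x := div_nonneg hNpos.le (hupos α x).le
      have h4 : N / u α x < b := by
        have := Real.rpow_lt_rpow (Real.rpow_nonneg hq _) h3 (one_div_pos.mpr h2r)
        rwa [one_div, Real.rpow_rpow_inv hq h2r.ne', ← one_div] at this
      have h5 : N < b * u α x := (div_lt_iff₀ (hupos α x)).mp h4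
      have h6 : N ^ r < (b * u α x) ^ r := Real.rpow_lt_rpow hNpos.le h5 hr0
      rw [Real.mul_rpow hb.le (hupos α x).le, hNr, hbB] at h6
      exact le_of_lt ((div_lt_iff₀' hB).mpr h6)
    have hfin : μ E ≠ ⊤ := measure_ne_top μ E
    have hlow : I / B * (μ E).toReal ≤ ∫ x in E, u α x ^ r ∂μ :=
      setIntegral_ge_of_const_le_real hEmeas hfin hpt (huLr α).integrableOn
    have hup : ∫ x in E, u α x ^ r ∂μ ≤ I :=
      setIntegral_le_integral (huLr α)
        (Filter.Eventually.of_forall fun y => Real.rpow_nonneg (hupos α y).le r)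
    have ht : (μ E).toReal ≤ B := by
      have h7 : I / B * (μ E).toReal ≤ I := le_trans hlow hup
      rw [div_mul_eq_mul_div, div_le_iff₀ hB] at h7
      exact le_of_mul_le_mul_left (by linarith) hI
    calc μ E = ENNReal.ofReal ((μ E).toReal) := (ENNReal.ofReal_toReal hfin).symm
      _ ≤ ENNReal.ofReal B := ENNReal.ofReal_le_ofReal ht
  refine ⟨C, hC, key, ?_⟩
  have hg : Tendsto (fun α : ℝ => ENNReal.ofReal ((C / α) ^ (r / (2 - r)))) atTop (nhds 0) := by
    have h1 : Tendsto (fun α : ℝ => C / α) atTop (nhds 0) :=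
      tendsto_const_nhds.div_atTop tendsto_id
    have h2 := h1.rpow_const (Or.inr (by positivity : (0:ℝ) ≤ r / (2 - r)))
    rw [Real.zero_rpow (by positivity : r / (2 - r) ≠ 0)] at h2
    simpa using ENNReal.tendsto_ofReal h2
  exact tendsto_of_tendsto_of_tendsto_of_le_of_le' tendsto_const_nhds hg
    (Filter.Eventually.of_forall fun α => zero_le)
    (eventually_atTop.mpr ⟨1, fun α hα => key α (by linarith)⟩)
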